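/- There exist constants C₁ > 0 and C₂ > 0 such that for every bilinear function p(x,y) = α + βx + γy + δxy on [0,1]², C₁ · ∫_{[0,1]²} ( p_x(x,y)² + p_y(x,y)² ) dx dy ≤ T(p_x²) + T(p_y²) ≤ C₂ · ∫_{[0,1]²} ( p_x(x,y)² + p_y(x,y)² ) dx dy, where T(g) = (1/4)( g(0,0) + g(1,0) + g(0,1) + g(1,1) ) is the 2D tensor-product trapezoid rule on [0,1]². -/

import Mathlib

noncomputable section

/-- The 2D tensor-product trapezoid rule on `[0,1]²`. -/
def trapQ (g : ℝ → ℝ → ℝ) : ℝ := (1/4) * (g 0 0 + g 1 0 + g 0 1 + g 1 1)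

/-- Partial derivative in the first variable. -/
def gradX (f : ℝ → ℝ → ℝ) (x y : ℝ) : ℝ := deriv (fun s => f s y) x

/-- Partial derivative in the second variable. -/
def gradY (f : ℝ → ℝ → ℝ) (x y : ℝ) : ℝ := deriv (fun t => f x t) y

lemma int01 (a b c : ℝ) : (∫ t in (0:ℝ)..1, (a + b*t + c*t^2)) = a + b/2 + c/3 := by
  have h : ∀ t ∈ Set.uIcc (0:ℝ) 1,
      HasDerivAt (fun t => a*t + b*(t^2/2) + c*(t^3/3)) (a + b*t + c*t^2) t := by
    intro t _
    have h1 : HasDerivAt (fun t : ℝ => a*t) a t := by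
      simpa using (hasDerivAt_id t).const_mul a
    have h2 : HasDerivAt (fun t : ℝ => b*(t^2/2)) (b*t) t := by
      have := ((hasDerivAt_pow 2 t).div_const 2).const_mul b
      simpa using this.congr_deriv (by ring)
    have h3 : HasDerivAt (fun t : ℝ => c*(t^3/3)) (c*t^2) t := by
      have := ((hasDerivAt_pow 3 t).div_const 3).const_mul c
      simpa using this.congr_deriv (by ring)
    exact (h1.add h2).add h3
  have hc : IntervalIntegrable (fun t => a + b*t + c*t^2) MeasureTheory.volume 0 1 :=
    (Continuous.intervalIntegrable (by continuity) 0 1)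
  rw [intervalIntegral.integral_eq_sub_of_hasDerivAt h hc]
  ring

theorem stmt_14 :
    ∃ C1 C2 : ℝ, 0 < C1 ∧ 0 < C2 ∧
      ∀ α β γ δ : ℝ,
        (fun p : ℝ → ℝ → ℝ =>
          C1 * (∫ x in (0:ℝ)..1, ∫ y in (0:ℝ)..1, (gradX p x y ^ 2 + gradY p x y ^ 2))
              ≤ trapQ (fun x y => gradX p x y ^ 2) + trapQ (fun x y => gradY p x y ^ 2)
          ∧ trapQ (fun x y => gradX p x y ^ 2) + trapQ (fun x y => gradY p x y ^ 2)
              ≤ C2 * (∫ x in (0:ℝ)..1, ∫ y in (0:ℝ)..1,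
                  (gradX p x y ^ 2 + gradY p x y ^ 2)))
          (fun x y => α + β * x + γ * y + δ * x * y) := by
  refine ⟨1, 3, one_pos, by norm_num, ?_⟩
  intro α β γ δ
  set p : ℝ → ℝ → ℝ := fun x y => α + β * x + γ * y + δ * x * y with hp
  have hgx : ∀ x y : ℝ, gradX p x y = β + δ * y := by
    intro x y
    have h : HasDerivAt (fun s : ℝ => α + β * s + γ * y + δ * s * y) (β + δ * y) x := by
      have h1 : HasDerivAt (fun s : ℝ => β * s) β x := by
        simpa using (hasDerivAt_id x).const_mul β
      have h2 : HasDerivAt (fun s : ℝ => δ * s * y) (δ * y) x := by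
        have := ((hasDerivAt_id x).const_mul δ).mul_const y
        simpa using this
      simpa [Pi.add_def] using ((((hasDerivAt_const x α).add h1).add (hasDerivAt_const x (γ*y))).add h2)
    exact h.deriv
  have hgy : ∀ x y : ℝ, gradY p x y = γ + δ * x := by
    intro x y
    have h : HasDerivAt (fun t : ℝ => α + β * x + γ * t + δ * x * t) (γ + δ * x) y := by
      have h1 : HasDerivAt (fun t : ℝ => γ * t) γ y := by
        simpa using (hasDerivAt_id y).const_mul γ
      have h2 : HasDerivAt (fun t : ℝ => δ * x * t) (δ * x) y := by
        simpa using (hasDerivAt_id y).const_mul (δ * x)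
      simpa [Pi.add_def] using (((hasDerivAt_const y (α + β*x)).add h1).add h2).congr_deriv (by ring)
    exact h.deriv
  have hint : (∫ x in (0:ℝ)..1, ∫ y in (0:ℝ)..1, (gradX p x y ^ 2 + gradY p x y ^ 2))
      = β^2 + γ^2 + β*δ + γ*δ + 2*δ^2/3 := by
    have hin : ∀ x : ℝ, (∫ y in (0:ℝ)..1, (gradX p x y ^ 2 + gradY p x y ^ 2))
        = (β^2 + β*δ + δ^2/3) + (γ + δ*x)^2 := by
      intro x
      have : (fun y => gradX p x y ^ 2 + gradY p x y ^ 2)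
          = fun y => (β^2 + (γ + δ*x)^2) + (2*β*δ)*y + δ^2*y^2 := by
        funext y; rw [hgx, hgy]; ring
      rw [this, int01]; ring
    calc (∫ x in (0:ℝ)..1, ∫ y in (0:ℝ)..1, (gradX p x y ^ 2 + gradY p x y ^ 2))
        = ∫ x in (0:ℝ)..1, ((β^2 + β*δ + δ^2/3 + γ^2) + (2*γ*δ)*x + δ^2*x^2) := by
          apply intervalIntegral.integral_congr
          intro x _; dsimp only; rw [hin x]; ring
      _ = β^2 + γ^2 + β*δ + γ*δ + 2*δ^2/3 := by rw [int01]; ring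
  have htr : trapQ (fun x y => gradX p x y ^ 2) + trapQ (fun x y => gradY p x y ^ 2)
      = β^2 + γ^2 + β*δ + γ*δ + δ^2 := by
    simp only [trapQ, hgx, hgy]; ring

  rw [hint, htr]
  constructor <;> nlinarith [sq_nonneg δ, sq_nonneg (β + δ/2), sq_nonneg (γ + δ/2)]
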